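/- For an integer d ≥ 1 let Λ_d = {(i,j,l) ∈ ℤ³ : i ≥ 1, j ≥ 1, i + j ≤ d − 1, 0 ≤ l ≤ d − i − j}, and for (i,j,l) ∈ Λ_d set λ(i,j,l) = ((3(d−i) + 2 + 2j + 2l)·(d−i+1))/2, which is an integer. Then there exists a constant C > 0 such that for every d ≥ 1 the number of triples (i,j,l) ∈ Λ_d with λ(i,j,l) odd differs from d³/12 by at most C·d². -/

import Mathlib

/-- The index set `Λ_d = {(i,j,l) ∈ ℤ³ : i ≥ 1, j ≥ 1, i+j ≤ d−1, 0 ≤ l ≤ d−i−j}`. -/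
def LambdaSet (d : ℤ) : Set (ℤ × ℤ × ℤ) :=
  {t | 1 ≤ t.1 ∧ 1 ≤ t.2.1 ∧ t.1 + t.2.1 ≤ d - 1 ∧ 0 ≤ t.2.2 ∧ t.2.2 ≤ d - t.1 - t.2.1}

/-- Twice the quantity `λ(i,j,l)`, namely `(3(d−i)+2+2j+2l)·(d−i+1)`. -/
def lamNum (d : ℤ) (t : ℤ × ℤ × ℤ) : ℤ :=
  (3 * (d - t.1) + 2 + 2 * t.2.1 + 2 * t.2.2) * (d - t.1 + 1)

open Finset

def oddCond (m j l : ℕ) : Prop := Odd ((3*m+2+2*j+2*l)*(m+1)/2)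

instance (m j l : ℕ) : Decidable (oddCond m j l) := by unfold oddCond; infer_instance

def Sfin (m : ℕ) : Finset (ℕ×ℕ) :=
  (range (m+1) ×ˢ range (m+1)).filter fun p => 1 ≤ p.1 ∧ p.1+1 ≤ m ∧ p.1+p.2 ≤ m ∧ oddCond m p.1 p.2

def Ufin (d : ℕ) : Finset (ℕ×ℕ×ℕ) :=
  (range d ×ˢ range d ×ˢ range d).filter fun t =>
    1 ≤ t.2.1 ∧ t.2.1+1 ≤ t.1 ∧ t.2.1+t.2.2 ≤ t.1 ∧ oddCond t.1 t.2.1 t.2.2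

lemma U_decomp (d : ℕ) : (Ufin d).card = ∑ m ∈ range d, (Sfin m).card := by
  have h : Ufin d = (range d).biUnion fun m => (Sfin m).image fun p => (m, p.1, p.2) := by
    ext ⟨m, j, l⟩
    simp only [Ufin, Sfin, mem_filter, mem_product, mem_range, mem_biUnion, mem_image, Prod.mk.injEq, Prod.exists]
    constructor
    · rintro ⟨⟨hm, hj, hl⟩, h1, h2, h3, h4⟩
      exact ⟨m, hm, j, l, ⟨⟨by omega, by omega⟩, h1, h2, h3, h4⟩, rfl, rfl, rfl⟩
    · rintro ⟨m', hm', j', l', ⟨⟨hj', hl'⟩, h1, h2, h3, h4⟩, rfl, rfl, rfl⟩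
      exact ⟨⟨hm', by omega, by omega⟩, h1, h2, h3, h4⟩
  rw [h, card_biUnion]
  · refine Finset.sum_congr rfl fun m _ => ?_
    exact card_image_of_injective _ (fun a b hab => by simpa [Prod.ext_iff] using hab)
  · intro a _ b _ hab
    simp only [disjoint_left, mem_image, Prod.exists]
    rintro x ⟨j, l, _, rfl⟩ ⟨j', l', _, h⟩
    obtain ⟨h1, -⟩ := Prod.mk.inj h
    exact hab h1.symm

def cnt (m j : ℕ) : ℕ :=
  ((range (m+1)).filter fun l => 1 ≤ j ∧ j+1 ≤ m ∧ j+l ≤ m ∧ oddCond m j l).card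

lemma S_decomp (m : ℕ) : (Sfin m).card = ∑ j ∈ range (m+1), cnt m j := by
  have h : Sfin m = (range (m+1)).biUnion fun j =>
      ((range (m+1)).filter fun l => 1 ≤ j ∧ j+1 ≤ m ∧ j+l ≤ m ∧ oddCond m j l).image (Prod.mk j) := by
    ext ⟨j, l⟩
    simp only [Sfin, mem_filter, mem_product, mem_range, mem_biUnion, mem_image, Prod.mk.injEq]
    constructor
    · rintro ⟨⟨hj, hl⟩, h1, h2, h3, h4⟩
      exact ⟨j, hj, l, ⟨hl, h1, h2, h3, h4⟩, rfl, rfl⟩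
    · rintro ⟨j', hj', l', ⟨hl', h1, h2, h3, h4⟩, rfl, rfl⟩
      exact ⟨⟨hj', hl'⟩, h1, h2, h3, h4⟩
  rw [h, card_biUnion]
  · exact Finset.sum_congr rfl fun j _ =>
      card_image_of_injective _ (fun a b hab => by simpa using hab)
  · intro a _ b _ hab
    simp only [disjoint_left, mem_image]
    rintro x ⟨l, _, rfl⟩ ⟨l', _, h⟩
    obtain ⟨h1, -⟩ := Prod.mk.inj h
    exact hab h1.symm

lemma card_filter_parity (n r : ℕ) :
    ((range (n+1)).filter fun l => (l + r) % 2 = 0).card = (n + 2 - r % 2) / 2 := by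
  induction n with
  | zero =>
    by_cases h : r % 2 = 0 <;> simp [Finset.filter_singleton, range_one, h] <;> omega
  | succ n ih =>
    rw [range_add_one, filter_insert]
    by_cases h : (n + 1 + r) % 2 = 0
    · rw [if_pos h, card_insert_of_notMem (by simp), ih]; omega
    · rw [if_neg h, ih]; omega

lemma oddCond_mod1 (k j l : ℕ) : oddCond (4*k+1) j l := by
  unfold oddCond
  have h : (3*(4*k+1)+2+2*j+2*l)*((4*k+1)+1) = 2*((12*k+5+2*j+2*l)*(2*k+1)) := by ring
  rw [h, Nat.mul_div_cancel_left _ two_pos]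
  have h1 : Odd (12*k+5+2*j+2*l) := ⟨6*k+2+j+l, by ring⟩
  exact h1.mul ⟨k, by ring⟩

lemma not_oddCond_mod3 (k j l : ℕ) : ¬ oddCond (4*k+3) j l := by
  unfold oddCond
  have h : (3*(4*k+3)+2+2*j+2*l)*((4*k+3)+1) = 2*((3*(4*k+3)+2+2*j+2*l)*(2*k+2)) := by ring
  rw [h, Nat.mul_div_cancel_left _ two_pos, Nat.odd_mul]
  rintro ⟨-, h2⟩
  exact (Nat.not_odd_iff_even.mpr ⟨k+1, by ring⟩) h2

lemma oddCond_even (q j l : ℕ) : oddCond (2*q) j l ↔ (l + (j + q)) % 2 = 0 := by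
  unfold oddCond
  have h : (3*(2*q)+2+2*j+2*l)*((2*q)+1) = 2*((3*q+1+j+l)*(2*q+1)) := by ring
  rw [h, Nat.mul_div_cancel_left _ two_pos, Nat.odd_mul]
  have h2 : Odd (2*q+1) := ⟨q, by ring⟩
  rw [and_iff_left h2, Nat.odd_iff]
  omega

lemma cnt_eq_zero (m j : ℕ) (h : ¬(1 ≤ j ∧ j+1 ≤ m)) : cnt m j = 0 := by
  rw [cnt, Finset.card_eq_zero, Finset.filter_eq_empty_iff]
  intro x _
  tauto

lemma cnt_mod1 (k j : ℕ) (h1 : 1 ≤ j) (h2 : j+1 ≤ 4*k+1) : cnt (4*k+1) j = (4*k+1) - j + 1 := by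
  rw [cnt]
  have h : ((range ((4*k+1)+1)).filter fun l => 1 ≤ j ∧ j+1 ≤ 4*k+1 ∧ j+l ≤ 4*k+1 ∧ oddCond (4*k+1) j l)
      = range ((4*k+1) - j + 1) := by
    ext x
    simp only [mem_filter, mem_range]
    constructor
    · rintro ⟨-, -, -, h3, -⟩; omega
    · intro hx; exact ⟨by omega, h1, h2, by omega, oddCond_mod1 k j x⟩
  rw [h, card_range]

lemma cnt_mod3 (k j : ℕ) : cnt (4*k+3) j = 0 := by
  rw [cnt, Finset.card_eq_zero, Finset.filter_eq_empty_iff]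
  intro x _ hx
  exact not_oddCond_mod3 k j x hx.2.2.2

lemma cnt_even (q j : ℕ) (h1 : 1 ≤ j) (h2 : j+1 ≤ 2*q) :
    cnt (2*q) j = ((2*q - j) + 2 - (j+q) % 2) / 2 := by
  rw [cnt]
  have h : ((range ((2*q)+1)).filter fun l => 1 ≤ j ∧ j+1 ≤ 2*q ∧ j+l ≤ 2*q ∧ oddCond (2*q) j l)
      = (range ((2*q - j)+1)).filter fun l => (l + (j+q)) % 2 = 0 := by
    ext x
    simp only [mem_filter, mem_range, oddCond_even]
    constructor
    · rintro ⟨-, -, -, h3, h4⟩; exact ⟨by omega, h4⟩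
    · rintro ⟨hx, h4⟩; exact ⟨by omega, h1, h2, by omega, h4⟩
  rw [h, card_filter_parity]

lemma sum_lin (M : ℕ) (hM : 1 ≤ M) :
    2 * (∑ j ∈ range M, if 1 ≤ j then j+1 else 0) + 2 = M*M + M := by
  induction M, hM using Nat.le_induction with
  | base => simp
  | succ M hM ih =>
    rw [Finset.sum_range_succ, if_pos hM]
    zify at ih ⊢
    linear_combination ih

lemma sum_half0 (M : ℕ) (hM : 1 ≤ M) :
    4 * (∑ j ∈ range M, if 1 ≤ j then j/2+1 else 0) + 4 = M*M + 2*M + M % 2 := by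
  induction M, hM using Nat.le_induction with
  | base => simp
  | succ M hM ih =>
    rw [Finset.sum_range_succ, if_pos hM]
    obtain ⟨t, rfl | rfl⟩ := Nat.even_or_odd' M
    · have e1 : 2*t/2 = t := by omega
      have e2 : (2*t) % 2 = 0 := by omega
      have e3 : (2*t+1) % 2 = 1 := by omega
      rw [e1] at *
      rw [e2] at ih
      rw [e3]
      zify at ih ⊢
      linear_combination ih
    · have e1 : (2*t+1)/2 = t := by omega
      have e2 : (2*t+1) % 2 = 1 := by omega
      have e3 : (2*t+1+1) % 2 = 0 := by omega
      rw [e1] at *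
      rw [e2] at ih
      rw [e3]
      zify at ih ⊢
      linear_combination ih

lemma sum_half1 (M : ℕ) (hM : 1 ≤ M) :
    4 * (∑ j ∈ range M, if 1 ≤ j then (j+1)/2 else 0) + M % 2 = M*M := by
  induction M, hM using Nat.le_induction with
  | base => simp
  | succ M hM ih =>
    rw [Finset.sum_range_succ, if_pos hM]
    obtain ⟨t, rfl | rfl⟩ := Nat.even_or_odd' M
    · have e1 : (2*t+1)/2 = t := by omega
      have e2 : (2*t) % 2 = 0 := by omega
      have e3 : (2*t+1) % 2 = 1 := by omega
      rw [e1, e3]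
      rw [e2] at ih
      zify at ih ⊢
      linear_combination ih
    · have e1 : (2*t+1+1)/2 = t+1 := by omega
      have e2 : (2*t+1) % 2 = 1 := by omega
      have e3 : (2*t+1+1) % 2 = 0 := by omega
      rw [e1, e3]
      rw [e2] at ih
      zify at ih ⊢
      linear_combination ih

lemma S_mod1 (k : ℕ) : 2 * (Sfin (4*k+1)).card + 2 = (4*k+1)*(4*k+1) + (4*k+1) := by
  set m := 4*k+1 with hm
  have hm1 : 1 ≤ m := by omega
  have hr := Finset.sum_range_reflect (fun K => if 1 ≤ K ∧ K+1 ≤ m then K+1 else 0) (m+1)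
  beta_reduce at hr
  have h2 : ∑ j ∈ range (m+1), cnt m j
      = ∑ j ∈ range (m+1), if 1 ≤ m+1-1-j ∧ (m+1-1-j)+1 ≤ m then (m+1-1-j)+1 else 0 := by
    refine Finset.sum_congr rfl fun j hj => ?_
    simp only [mem_range] at hj
    by_cases hc : 1 ≤ j ∧ j+1 ≤ m
    · rw [cnt_mod1 k j hc.1 hc.2, if_pos (by omega)]
      omega
    · rw [cnt_eq_zero m j hc, if_neg (by omega)]
  rw [S_decomp, h2, hr, Finset.sum_range_succ, if_neg (by omega), add_zero]
  have h3 : ∑ K ∈ range m, (if 1 ≤ K ∧ K+1 ≤ m then K+1 else 0)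
      = ∑ K ∈ range m, (if 1 ≤ K then K+1 else 0) := by
    refine Finset.sum_congr rfl fun K hK => ?_
    simp only [mem_range] at hK
    by_cases h1 : 1 ≤ K
    · rw [if_pos ⟨h1, by omega⟩, if_pos h1]
    · rw [if_neg (by tauto), if_neg h1]
  rw [h3, sum_lin m hm1]

lemma S_mod3 (k : ℕ) : (Sfin (4*k+3)).card = 0 := by
  rw [S_decomp]
  exact Finset.sum_eq_zero fun j _ => cnt_mod3 k j

lemma S_even_aux (q : ℕ) (hq : 1 ≤ q) :
    (Sfin (2*q)).card = ∑ K ∈ range (2*q), (if 1 ≤ K ∧ K+1 ≤ 2*q then (K + 2 - (K+q) % 2)/2 else 0) := by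
  set m := 2*q with hm
  have hr := Finset.sum_range_reflect (fun K => if 1 ≤ K ∧ K+1 ≤ m then (K + 2 - (K+q) % 2)/2 else 0) (m+1)
  beta_reduce at hr
  have h2 : ∑ j ∈ range (m+1), cnt m j
      = ∑ j ∈ range (m+1), if 1 ≤ m+1-1-j ∧ (m+1-1-j)+1 ≤ m then ((m+1-1-j) + 2 - ((m+1-1-j)+q) % 2)/2 else 0 := by
    refine Finset.sum_congr rfl fun j hj => ?_
    simp only [mem_range] at hj
    by_cases hc : 1 ≤ j ∧ j+1 ≤ m
    · rw [cnt_even q j hc.1 hc.2, if_pos (by omega)]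
      omega
    · rw [cnt_eq_zero m j hc, if_neg (by omega)]
  rw [S_decomp, h2, hr, Finset.sum_range_succ, if_neg (by omega), add_zero]

lemma S_mod0 (k : ℕ) (hk : 1 ≤ k) :
    4 * (Sfin (4*k)).card + 4 = (4*k)*(4*k) + 2*(4*k) := by
  have h0 : (4:ℕ)*k = 2*(2*k) := by ring
  rw [h0, S_even_aux (2*k) (by omega)]
  have h3 : ∑ K ∈ range (2*(2*k)), (if 1 ≤ K ∧ K+1 ≤ 2*(2*k) then (K + 2 - (K+2*k) % 2)/2 else 0)
      = ∑ K ∈ range (2*(2*k)), (if 1 ≤ K then K/2+1 else 0) := by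
    refine Finset.sum_congr rfl fun K hK => ?_
    simp only [mem_range] at hK
    by_cases h1 : 1 ≤ K
    · rw [if_pos ⟨h1, by omega⟩, if_pos h1]
      omega
    · rw [if_neg (by tauto), if_neg h1]
  rw [h3, sum_half0 (2*(2*k)) (by omega)]
  omega

lemma S_mod2 (k : ℕ) : 4 * (Sfin (4*k+2)).card = (4*k+2)*(4*k+2) := by
  have h0 : (4:ℕ)*k+2 = 2*(2*k+1) := by ring
  rw [h0, S_even_aux (2*k+1) (by omega)]
  have h3 : ∑ K ∈ range (2*(2*k+1)), (if 1 ≤ K ∧ K+1 ≤ 2*(2*k+1) then (K + 2 - (K+(2*k+1)) % 2)/2 else 0)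
      = ∑ K ∈ range (2*(2*k+1)), (if 1 ≤ K then (K+1)/2 else 0) := by
    refine Finset.sum_congr rfl fun K hK => ?_
    simp only [mem_range] at hK
    by_cases h1 : 1 ≤ K
    · rw [if_pos ⟨h1, by omega⟩, if_pos h1]
      omega
    · rw [if_neg (by tauto), if_neg h1]
  rw [h3]
  have := sum_half1 (2*(2*k+1)) (by omega)
  omega

def Pf (d : ℕ) : ℤ :=
  4*(d:ℤ)^3 + (if d % 4 = 0 then -6*(d:ℤ)^2 - 40*d + 48
    else if d % 4 = 1 then -6*(d:ℤ)^2 - 16*d + 18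
    else if d % 4 = 2 then 6*(d:ℤ)^2 - 16*d - 24
    else 6*(d:ℤ)^2 - 40*d + 6)

lemma N_formula (d : ℕ) (hd : 1 ≤ d) : 48 * ((Ufin d).card : ℤ) = Pf d := by
  induction d, hd using Nat.le_induction with
  | base => decide
  | succ d hd ih =>
    have hcard : (Ufin (d+1)).card = (Ufin d).card + (Sfin d).card := by
      rw [U_decomp, U_decomp, Finset.sum_range_succ]
    rw [hcard]
    have h4 : d % 4 = 0 ∨ d % 4 = 1 ∨ d % 4 = 2 ∨ d % 4 = 3 := by omega
    rcases h4 with h | h | h | h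
    · obtain ⟨k, rfl⟩ : ∃ k, d = 4*k := ⟨d/4, by omega⟩
      have hk : 1 ≤ k := by omega
      have hS := S_mod0 k hk
      have e0 : (4*k) % 4 = 0 := by omega
      have e1 : (4*k+1) % 4 = 1 := by omega
      simp only [Pf, e0, e1] at ih ⊢
      norm_num at ih ⊢
      zify at hS
      push_cast at ih ⊢
      linear_combination ih + 12 * hS
    · obtain ⟨k, rfl⟩ : ∃ k, d = 4*k+1 := ⟨d/4, by omega⟩
      have hS := S_mod1 k
      have e0 : (4*k+1) % 4 = 1 := by omega
      have e1 : (4*k+1+1) % 4 = 2 := by omega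
      simp only [Pf, e0, e1] at ih ⊢
      norm_num at ih ⊢
      zify at hS
      push_cast at ih ⊢
      linear_combination ih + 24 * hS
    · obtain ⟨k, rfl⟩ : ∃ k, d = 4*k+2 := ⟨d/4, by omega⟩
      have hS := S_mod2 k
      have e0 : (4*k+2) % 4 = 2 := by omega
      have e1 : (4*k+2+1) % 4 = 3 := by omega
      simp only [Pf, e0, e1] at ih ⊢
      norm_num at ih ⊢
      zify at hS
      push_cast at ih ⊢
      linear_combination ih + 12 * hS
    · obtain ⟨k, rfl⟩ : ∃ k, d = 4*k+3 := ⟨d/4, by omega⟩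
      have hS := S_mod3 k
      have e0 : (4*k+3) % 4 = 3 := by omega
      have e1 : (4*k+3+1) % 4 = 0 := by omega
      simp only [Pf, e0, e1] at ih ⊢
      norm_num at ih ⊢
      zify at hS
      push_cast [hS] at ih ⊢
      linear_combination ih

lemma odd_iff_oddCond (m j l : ℕ) :
    Odd ((3*(m:ℤ)+2+2*(j:ℤ)+2*(l:ℤ)) * ((m:ℤ)+1) / 2) ↔ oddCond m j l := by
  have h : (3*(m:ℤ)+2+2*(j:ℤ)+2*(l:ℤ)) * ((m:ℤ)+1) = (((3*m+2+2*j+2*l)*(m+1) : ℕ) : ℤ) := by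
    push_cast; ring
  rw [h, show (2:ℤ) = ((2:ℕ):ℤ) from rfl, ← Int.natCast_div, Int.odd_coe_nat]
  rfl

lemma set_eq (d : ℕ) :
    {t ∈ LambdaSet (d:ℤ) | Odd (lamNum (d:ℤ) t / 2)} =
      ↑((Ufin d).image fun t => ((d:ℤ) - t.1, (t.2.1:ℤ), (t.2.2:ℤ))) := by
  ext ⟨i, j, l⟩
  simp only [Set.mem_setOf_eq, LambdaSet, lamNum, Finset.coe_image, Set.mem_image,
    Finset.mem_coe, Ufin, Finset.mem_filter, Finset.mem_product, Finset.mem_range, Prod.exists]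
  constructor
  · rintro ⟨⟨h1, h2, h3, h4, h5⟩, hodd⟩
    refine ⟨(d - i).toNat, j.toNat, l.toNat, ⟨⟨by omega, by omega, by omega⟩, by omega, by omega,
      by omega, ?_⟩, by simp only [Prod.mk.injEq]; omega⟩
    rw [← odd_iff_oddCond]
    have em : (((d:ℤ) - i).toNat : ℤ) = (d:ℤ) - i := by omega
    have ej : ((j.toNat : ℕ) : ℤ) = j := by omega
    have el : ((l.toNat : ℕ) : ℤ) = l := by omega
    rw [em, ej, el]
    exact hodd
  · rintro ⟨m, jn, ln, ⟨⟨hm, hj, hl⟩, c1, c2, c3, c4⟩, heq⟩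
    obtain ⟨ei, ej, el⟩ : (d:ℤ) - m = i ∧ (jn:ℤ) = j ∧ (ln:ℤ) = l := by
      simpa [Prod.ext_iff] using heq
    refine ⟨⟨by omega, by omega, by omega, by omega, by omega⟩, ?_⟩
    rw [← ei, ← ej, ← el]
    have e2 : (d:ℤ) - ((d:ℤ) - m) = m := by ring
    rw [e2]
    exact (odd_iff_oddCond m jn ln).mpr c4

lemma ncard_eq (d : ℕ) :
    ({t ∈ LambdaSet (d:ℤ) | Odd (lamNum (d:ℤ) t / 2)}).ncard = (Ufin d).card := by
  rw [set_eq, Set.ncard_coe_finset]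
  apply Finset.card_image_of_injOn
  intro a _ b _ hab
  simp only [Prod.ext_iff] at hab
  obtain ⟨h1, h2, h3⟩ := hab
  have : a.1 = b.1 := by omega
  have e2 : a.2.1 = b.2.1 := by exact_mod_cast h2
  have e3 : a.2.2 = b.2.2 := by exact_mod_cast h3
  exact Prod.ext this (Prod.ext e2 e3)

theorem parity_count_circuitD :
    (∀ d : ℤ, ∀ t ∈ LambdaSet d, 2 ∣ lamNum d t) ∧
    ∃ C : ℝ, 0 < C ∧ ∀ d : ℕ, 1 ≤ d →
      |({t ∈ LambdaSet (d : ℤ) | Odd (lamNum (d : ℤ) t / 2)}.ncard : ℝ) -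
          (d : ℝ) ^ 3 / 12| ≤ C * (d : ℝ) ^ 2 := by
  constructor
  · intro d t _
    rcases Int.even_or_odd (d - t.1) with ⟨a, ha⟩ | ⟨a, ha⟩
    · exact ⟨(3*a+1+t.2.1+t.2.2)*(a+a+1), by rw [lamNum, ha]; ring⟩
    · exact ⟨(3*(2*a+1)+2+2*t.2.1+2*t.2.2)*(a+1), by rw [lamNum, ha]; ring⟩
  · refine ⟨2, by norm_num, fun d hd => ?_⟩
    have hN := N_formula d hd
    rw [ncard_eq d]
    have hd' : (1:ℝ) ≤ d := by exact_mod_cast hd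
    have hdd : (d:ℝ) ≤ (d:ℝ)^2 := by nlinarith
    have hdd2 : (1:ℝ) ≤ (d:ℝ)^2 := by nlinarith
    have hR : 48 * (((Ufin d).card : ℕ) : ℝ) = ((Pf d : ℤ) : ℝ) := by exact_mod_cast hN
    have h4 : d % 4 = 0 ∨ d % 4 = 1 ∨ d % 4 = 2 ∨ d % 4 = 3 := by omega
    rcases h4 with h | h | h | h <;>
      [skip; skip; skip; skip] <;>
      (simp only [Pf, h] at hR; norm_num at hR; push_cast at hR;
       rw [abs_le]; constructor <;> linarith [hR, hd', hdd, hdd2])
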